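/- For every y ∈ [N], the expected number of inverse-active locations for a uniformly random permutation satisfies (1/N!) ∑_{π ∈ S_N} |A^inv(π,y)| ≤ 1 + (2y − 2)/N; in particular this expectation is strictly less than 3. -/

import Mathlib

/-- Embedding of `Fin (k+1)` into `Fin N` (where `k : Fin N`). -/
def emb {N : ℕ} (k : Fin N) (t : Fin (k.val + 1)) : Fin N :=
  ⟨t.val, lt_of_lt_of_le t.isLt k.isLt⟩

/-- `Phi t = (N t_N)(N−1 t_{N−1})⋯(2 t_2)(1 t_1)`, the strictly monotone factorization map. -/
def Phi {N : ℕ} (t : ∀ k : Fin N, Fin (k.val + 1)) : Equiv.Perm (Fin N) :=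
  ((List.finRange N).reverse.map fun k => Equiv.swap k (emb k (t k))).prod

instance {N : ℕ} : Nonempty (∀ k : Fin N, Fin (k.val + 1)) := ⟨fun _ => 0⟩

/-- `tof π` is the tuple `(t_1(π),…,t_N(π))` of the strictly monotone factorization of `π`. -/
noncomputable def tof {N : ℕ} (π : Equiv.Perm (Fin N)) : ∀ k : Fin N, Fin (k.val + 1) :=
  Function.invFun Phi π

/-- `ptail π k` is `π_{>k} = (N t_N)⋯(k+1 t_{k+1})`. -/
noncomputable def ptail {N : ℕ} (π : Equiv.Perm (Fin N)) (k : Fin N) : Equiv.Perm (Fin N) :=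
  (((List.finRange N).reverse.filter fun j => decide (k < j)).map
    fun j => Equiv.swap j (emb j (tof π j))).prod

/-- `A^inv(π,y)`: the set of inverse-active locations, i.e. `k` with
`(π_{>k})⁻¹(y) ∈ {k, t_k(π)}`. -/
noncomputable def invActiveSet {N : ℕ} (π : Equiv.Perm (Fin N)) (y : Fin N) : Finset (Fin N) :=
  Finset.univ.filter fun k => (ptail π k)⁻¹ y = k ∨ (ptail π k)⁻¹ y = emb k (tof π k)

section Lists

lemma split_filter {α : Type*} (p : α → Bool) :
    ∀ l : List α, l.Pairwise (fun a b => p b = true → p a = true) →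
      l = l.filter p ++ l.filter (fun a => !p a)
  | [], _ => rfl
  | a :: l, h => by
    rcases List.pairwise_cons.mp h with ⟨ha, hl⟩
    by_cases hpa : p a = true
    · rw [List.filter_cons_of_pos hpa, List.filter_cons_of_neg (by simp [hpa]),
        List.cons_append, ← split_filter p l hl]
    · have hnb : ∀ b ∈ l, ¬ p b = true := fun b hb hpb => hpa (ha b hb hpb)
      have h1 : l.filter p = [] := List.filter_eq_nil_iff.mpr hnb
      have h2 : List.filter (fun a => !p a) l = l :=
        List.filter_eq_self.mpr (fun b hb => by simp [hnb b hb])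
      rw [List.filter_cons_of_neg hpa, List.filter_cons_of_pos (by simp [hpa]), h1, h2]
      simp

lemma filter_singleton_of {α : Type*} (p : α → Bool) (a : α) :
    ∀ l : List α, l.Nodup → a ∈ l → (∀ x ∈ l, p x = true ↔ x = a) → l.filter p = [a]
  | b :: l, hnd, hmem, hp => by
    rcases List.nodup_cons.mp hnd with ⟨hbl, hl⟩
    by_cases hba : b = a
    · subst hba
      rw [List.filter_cons_of_pos ((hp b (List.mem_cons_self)).mpr rfl)]
      have : l.filter p = [] := List.filter_eq_nil_iff.mpr fun x hx hpx => by
        have := (hp x (List.mem_cons_of_mem _ hx)).mp hpx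
        subst this; exact hbl hx
      rw [this]
    · have hal : a ∈ l := by
        rcases List.mem_cons.mp hmem with h | h
        · exact absurd h.symm hba
        · exact h
      rw [List.filter_cons_of_neg (fun h => hba ((hp b (List.mem_cons_self)).mp h))]
      exact filter_singleton_of p a l hl hal (fun x hx => hp x (List.mem_cons_of_mem _ hx))

end Lists

section Vm

variable {N : ℕ}

/-- product `s_m * s_{m+1} * ⋯ * s_{K-1}` of the swaps `s_j = (j t_j)`. -/
def Vm (t : ∀ k : Fin N, Fin (k.val + 1)) (m K : ℕ) : Equiv.Perm (Fin N) :=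
  (((List.finRange N).filter fun j => decide (m ≤ j.val ∧ j.val < K)).map
    fun j => Equiv.swap j (emb j (t j))).prod

lemma Vm_split (t : ∀ k : Fin N, Fin (k.val + 1)) {m c K : ℕ} (h1 : m ≤ c) (h2 : c ≤ K) :
    Vm t m K = Vm t m c * Vm t c K := by
  have hpw : (((List.finRange N).filter fun j => decide (m ≤ j.val ∧ j.val < K))).Pairwise
      (fun a b => (decide (b.val < c)) = true → (decide (a.val < c)) = true) :=
    ((List.pairwise_lt_finRange N).filter _).imp
      (by intro a b hab; simp only [decide_eq_true_eq]; omega)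
  have hsplit := split_filter _ _ hpw
  unfold Vm
  conv_lhs => rw [hsplit]
  rw [List.map_append, List.prod_append]
  congr 2
  · congr 1
    rw [List.filter_filter]
    apply List.filter_congr
    intro j _
    rw [← Bool.decide_and, decide_eq_decide]
    omega
  · congr 1
    rw [List.filter_filter]
    apply List.filter_congr
    intro j _
    rw [← decide_not, ← Bool.decide_and, decide_eq_decide]
    omega

lemma Vm_nil (t : ∀ k : Fin N, Fin (k.val + 1)) {m K : ℕ} (h : K ≤ m) : Vm t m K = 1 := by
  unfold Vm
  rw [List.filter_eq_nil_iff.mpr (fun j _ => by simp only [decide_eq_true_eq]; omega)]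
  simp

lemma Vm_single (t : ∀ k : Fin N, Fin (k.val + 1)) {K : ℕ} (hK : K < N) :
    Vm t K (K + 1) = Equiv.swap ⟨K, hK⟩ (emb ⟨K, hK⟩ (t ⟨K, hK⟩)) := by
  unfold Vm
  rw [filter_singleton_of _ ⟨K, hK⟩ _ (List.nodup_finRange N) (List.mem_finRange _)
    (fun x _ => by simp only [decide_eq_true_eq, Fin.ext_iff]; omega)]
  simp

lemma Vm_succ_top (t : ∀ k : Fin N, Fin (k.val + 1)) {m K : ℕ} (hm : m ≤ K) (hK : K < N) :
    Vm t m (K + 1) = Vm t m K * Equiv.swap ⟨K, hK⟩ (emb ⟨K, hK⟩ (t ⟨K, hK⟩)) := by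
  rw [Vm_split t hm (Nat.le_succ K), Vm_single t hK]

lemma prod_fix (t : ∀ k : Fin N, Fin (k.val + 1)) (c : ℕ) :
    ∀ l : List (Fin N), (∀ j ∈ l, j.val < c) → ∀ x : Fin N, c ≤ x.val →
      ((l.map fun j => Equiv.swap j (emb j (t j))).prod) x = x
  | [], _, x, hx => by simp
  | a :: l, hl, x, hx => by
    simp only [List.map_cons, List.prod_cons, Equiv.Perm.mul_apply]
    rw [prod_fix t c l (fun j hj => hl j (List.mem_cons_of_mem _ hj)) x hx]
    apply Equiv.swap_apply_of_ne_of_ne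
    · exact fun h => absurd (h ▸ hx) (by simp [Fin.ext_iff] at h ⊢; have := hl a (List.mem_cons_self); omega)
    · have := hl a (List.mem_cons_self)
      have h2 : (emb a (t a)).val ≤ a.val := Nat.lt_succ_iff.mp (t a).isLt
      exact fun h => by rw [Fin.ext_iff] at h; omega

lemma Vm_fix (t : ∀ k : Fin N, Fin (k.val + 1)) {m K : ℕ} {x : Fin N} (hx : K ≤ x.val) :
    Vm t m K x = x := by
  apply prod_fix t K
  · intro j hj
    have := List.of_mem_filter hj
    simp only [decide_eq_true_eq] at this
    exact this.2
  · exact hx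

lemma Vm_congr {t s : ∀ k : Fin N, Fin (k.val + 1)} {m K : ℕ}
    (h : ∀ j : Fin N, m ≤ j.val → j.val < K → t j = s j) : Vm t m K = Vm s m K := by
  unfold Vm
  congr 1
  apply List.map_congr_left
  intro j hj
  have := List.of_mem_filter hj
  simp only [decide_eq_true_eq] at this
  rw [h j this.1 this.2]

end Vm

section Bij

variable {N : ℕ}

lemma rev_prod (t : ∀ k : Fin N, Fin (k.val + 1)) :
    ∀ l : List (Fin N),
      ((l.reverse).map fun j => Equiv.swap j (emb j (t j))).prod
        = ((l.map fun j => Equiv.swap j (emb j (t j))).prod)⁻¹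
  | [] => by simp
  | a :: l => by
    simp only [List.reverse_cons, List.map_append, List.prod_append, List.map_cons,
      List.prod_cons, List.map_nil, List.prod_nil, mul_one, mul_inv_rev, rev_prod t l]
    simp [Equiv.swap_inv]

lemma Phi_eq (t : ∀ k : Fin N, Fin (k.val + 1)) : Phi t = (Vm t 0 N)⁻¹ := by
  unfold Phi Vm
  rw [rev_prod]
  congr 3
  symm
  apply List.filter_eq_self.mpr
  intro a _
  simp [a.isLt]

lemma Phi_injective : Function.Injective (Phi (N := N)) := by
  intro t s h
  rw [Phi_eq, Phi_eq, inv_inj] at h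
  have key : ∀ d : ℕ, ∀ k : Fin N, N - k.val ≤ d → t k = s k := by
    intro d
    induction d with
    | zero => intro k hk; exfalso; have := k.isLt; omega
    | succ d ih =>
      intro k hk
      have htail : ∀ j : Fin N, k.val < j.val → t j = s j := by
        intro j hj
        exact ih j (by omega)
      have hkN : k.val < N := k.isLt
      have hsplit : ∀ u : ∀ k : Fin N, Fin (k.val + 1),
          Vm u 0 N = (Vm u 0 k.val * Equiv.swap ⟨k.val, hkN⟩ (emb ⟨k.val, hkN⟩ (u ⟨k.val, hkN⟩)))
            * Vm u (k.val + 1) N := by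
        intro u
        rw [← Vm_succ_top u (Nat.zero_le _) hkN, ← Vm_split u (Nat.zero_le _) hkN]
      have hB : Vm t (k.val + 1) N = Vm s (k.val + 1) N :=
        Vm_congr (fun j hj _ => htail j (by omega))
      rw [hsplit t, hsplit s, hB] at h
      have h2 := mul_right_cancel h
      have heval : ∀ u : ∀ k : Fin N, Fin (k.val + 1),
          ((Vm u 0 k.val * Equiv.swap ⟨k.val, hkN⟩ (emb ⟨k.val, hkN⟩ (u ⟨k.val, hkN⟩)))⁻¹ : Equiv.Perm (Fin N)) k
            = emb ⟨k.val, hkN⟩ (u ⟨k.val, hkN⟩) := by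
        intro u
        have hfix : Vm u 0 k.val k = k := Vm_fix u le_rfl
        rw [mul_inv_rev, Equiv.Perm.mul_apply]
        have : ((Vm u 0 k.val)⁻¹ : Equiv.Perm (Fin N)) k = k := by
          rw [Equiv.Perm.inv_eq_iff_eq]
          exact hfix.symm
        rw [this, Equiv.swap_inv]
        exact Equiv.swap_apply_left _ _
      have h3 : emb ⟨k.val, hkN⟩ (t ⟨k.val, hkN⟩) = emb ⟨k.val, hkN⟩ (s ⟨k.val, hkN⟩) := by
        rw [← heval t, ← heval s, h2]
      have h5 : t ⟨k.val, hkN⟩ = s ⟨k.val, hkN⟩ := by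
        have h4 : (emb ⟨k.val, hkN⟩ (t ⟨k.val, hkN⟩)).val
            = (emb ⟨k.val, hkN⟩ (s ⟨k.val, hkN⟩)).val := congrArg Fin.val h3
        simp only [emb] at h4
        exact Fin.ext h4
      exact h5
  funext k
  exact key N k (by omega)

end Bij

section Bij2

variable {N : ℕ}

lemma card_T : Fintype.card (∀ k : Fin N, Fin (k.val + 1)) = N.factorial := by
  rw [Fintype.card_pi]
  simp only [Fintype.card_fin]
  rw [Fin.prod_univ_eq_prod_range (fun i => i + 1), Finset.prod_range_add_one_eq_factorial]

lemma Phi_bijective : Function.Bijective (Phi (N := N)) :=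
  (Fintype.bijective_iff_injective_and_card _).mpr
    ⟨Phi_injective, by rw [card_T, Fintype.card_perm, Fintype.card_fin]⟩

lemma tof_Phi (t : ∀ k : Fin N, Fin (k.val + 1)) : tof (Phi t) = t :=
  Function.leftInverse_invFun Phi_injective t

lemma Phi_tof (π : Equiv.Perm (Fin N)) : Phi (tof π) = π :=
  Function.rightInverse_invFun Phi_bijective.surjective π

lemma ptail_inv_eq (π : Equiv.Perm (Fin N)) (k : Fin N) :
    (ptail π k)⁻¹ = Vm (tof π) (k.val + 1) N := by
  unfold ptail Vm
  rw [List.filter_reverse, rev_prod, inv_inv]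
  congr 1
  congr 1
  apply List.filter_congr
  intro j _
  rw [decide_eq_decide, Fin.lt_def]
  exact ⟨fun h => ⟨h, j.isLt⟩, fun h => h.1⟩

end Bij2

section Count

variable {N : ℕ}

/-- active locations below level `K`, starting from value `v` at level `K`. -/
def act (t : ∀ k : Fin N, Fin (k.val + 1)) (K : ℕ) (v : Fin N) : Finset (Fin N) :=
  Finset.univ.filter fun j =>
    j.val < K ∧ (Vm t (j.val + 1) K v = j ∨ Vm t (j.val + 1) K v = emb j (t j))

noncomputable def Hc (N : ℕ) (K : ℕ) (v : Fin N) : ℕ :=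
  ∑ t : ∀ k : Fin N, Fin (k.val + 1), (act t K v).card

lemma act_out (t : ∀ k : Fin N, Fin (k.val + 1)) {K : ℕ} {v : Fin N} (hv : K ≤ v.val) :
    act t K v = ∅ := by
  ext j
  simp only [act, Finset.mem_filter, Finset.mem_univ, true_and, Finset.notMem_empty,
    iff_false, not_and, not_or]
  intro hj
  rw [Vm_fix t hv]
  constructor
  · intro h; rw [Fin.ext_iff] at h; omega
  · intro h
    rw [Fin.ext_iff] at h
    have : (emb j (t j)).val ≤ j.val := Nat.lt_succ_iff.mp (t j).isLt
    omega

lemma Hc_out {K : ℕ} {v : Fin N} (hv : K ≤ v.val) : Hc N K v = 0 := by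
  unfold Hc
  apply Finset.sum_eq_zero
  intro t _
  rw [act_out t hv, Finset.card_empty]

lemma act_congr' {t s : ∀ k : Fin N, Fin (k.val + 1)} {K : ℕ} {v : Fin N}
    (h : ∀ j : Fin N, j.val < K → t j = s j) : act t K v = act s K v := by
  ext j
  simp only [act, Finset.mem_filter, Finset.mem_univ, true_and]
  have hV : ∀ m : ℕ, Vm t m K = Vm s m K := fun m => Vm_congr (fun i _ hi => h i hi)
  constructor <;> intro ⟨hj, hor⟩ <;> refine ⟨hj, ?_⟩
  · rwa [hV, h j hj] at hor
  · rwa [← hV, ← h j hj] at hor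

lemma act_update {K : ℕ} (hK : K < N) (t : ∀ k : Fin N, Fin (k.val + 1))
    (c : Fin (K + 1)) (v : Fin N) :
    act (Function.update t ⟨K, hK⟩ c) K v = act t K v := by
  apply act_congr'
  intro j hj
  apply Function.update_of_ne
  intro h
  rw [h] at hj
  exact absurd hj (lt_irrefl K)

lemma card_act_succ {K : ℕ} (hK : K < N) (t : ∀ k : Fin N, Fin (k.val + 1)) (v : Fin N) :
    (act t (K + 1) v).card
      = (act t K (Equiv.swap ⟨K, hK⟩ (emb ⟨K, hK⟩ (t ⟨K, hK⟩)) v)).card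
        + (if v = ⟨K, hK⟩ ∨ v = emb ⟨K, hK⟩ (t ⟨K, hK⟩) then 1 else 0) := by
  have hnotmem : (⟨K, hK⟩ : Fin N) ∉ act t K (Equiv.swap ⟨K, hK⟩ (emb ⟨K, hK⟩ (t ⟨K, hK⟩)) v) := by
    intro h
    simp only [act, Finset.mem_filter, Finset.mem_univ, true_and] at h
    exact absurd h.1 (lt_irrefl K)
  have hset : act t (K + 1) v
      = if v = ⟨K, hK⟩ ∨ v = emb ⟨K, hK⟩ (t ⟨K, hK⟩)
          then insert ⟨K, hK⟩ (act t K (Equiv.swap ⟨K, hK⟩ (emb ⟨K, hK⟩ (t ⟨K, hK⟩)) v))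
          else act t K (Equiv.swap ⟨K, hK⟩ (emb ⟨K, hK⟩ (t ⟨K, hK⟩)) v) := by
    ext j
    simp only [act, Finset.mem_filter, Finset.mem_univ, true_and]
    by_cases hjlt : j.val < K
    · have h2 : Vm t (j.val + 1) (K + 1) v
          = Vm t (j.val + 1) K (Equiv.swap ⟨K, hK⟩ (emb ⟨K, hK⟩ (t ⟨K, hK⟩)) v) := by
        rw [Vm_succ_top t (by omega) hK]
        rfl
      have hjne : j ≠ ⟨K, hK⟩ := by
        intro h
        rw [Fin.ext_iff] at h
        have hvk : ((⟨K, hK⟩ : Fin N)).val = K := rfl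
        omega
      by_cases hc : v = ⟨K, hK⟩ ∨ v = emb ⟨K, hK⟩ (t ⟨K, hK⟩)
      · rw [if_pos hc, Finset.mem_insert]
        simp only [act, Finset.mem_filter, Finset.mem_univ, true_and]
        rw [h2]
        constructor
        · intro ⟨_, h⟩
          exact Or.inr ⟨hjlt, h⟩
        · rintro (h | ⟨_, h⟩)
          · exact absurd h hjne
          · exact ⟨by omega, h⟩
      · rw [if_neg hc]
        simp only [act, Finset.mem_filter, Finset.mem_univ, true_and]
        rw [h2]
        exact ⟨fun ⟨_, h⟩ => ⟨hjlt, h⟩, fun ⟨_, h⟩ => ⟨by omega, h⟩⟩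
    · by_cases hj : j = ⟨K, hK⟩
      · subst hj
        have h1 : Vm t (K + 1) (K + 1) = 1 := Vm_nil t le_rfl
        have heval : Vm t ((⟨K, hK⟩ : Fin N).val + 1) (K + 1) v = v := by
          show Vm t (K + 1) (K + 1) v = v
          rw [h1]
          rfl
        rw [heval]
        by_cases hc : v = ⟨K, hK⟩ ∨ v = emb ⟨K, hK⟩ (t ⟨K, hK⟩)
        · rw [if_pos hc]
          constructor
          · intro
            exact Finset.mem_insert_self _ _
          · intro _
            exact ⟨Nat.lt_succ_self K, hc⟩
        · rw [if_neg hc]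
          constructor
          · intro ⟨_, h⟩
            exact absurd h hc
          · intro h
            exact absurd h hnotmem
      · have hjgt : ¬ j.val < K + 1 := by
          rw [Fin.ext_iff] at hj
          have hvk : ((⟨K, hK⟩ : Fin N)).val = K := rfl
          omega
        have hR : j ∉ (if v = ⟨K, hK⟩ ∨ v = emb ⟨K, hK⟩ (t ⟨K, hK⟩)
            then insert ⟨K, hK⟩ (act t K (Equiv.swap ⟨K, hK⟩ (emb ⟨K, hK⟩ (t ⟨K, hK⟩)) v))
            else act t K (Equiv.swap ⟨K, hK⟩ (emb ⟨K, hK⟩ (t ⟨K, hK⟩)) v)) := by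
          have hact : j ∉ act t K (Equiv.swap ⟨K, hK⟩ (emb ⟨K, hK⟩ (t ⟨K, hK⟩)) v) := by
            intro h
            simp only [act, Finset.mem_filter, Finset.mem_univ, true_and] at h
            omega
          split
          · rw [Finset.mem_insert]
            rintro (h | h)
            · exact hj h
            · exact hact h
          · exact hact
        exact iff_of_false (fun h => hjgt h.1) hR
  rw [hset]
  by_cases hc : v = ⟨K, hK⟩ ∨ v = emb ⟨K, hK⟩ (t ⟨K, hK⟩)
  · rw [if_pos hc, if_pos hc, Finset.card_insert_of_notMem hnotmem]
  · rw [if_neg hc, if_neg hc, Nat.add_zero]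

end Count

section Fiber

variable {N : ℕ}

lemma fiber_sum {K : ℕ} (hK : K < N) (G : (∀ k : Fin N, Fin (k.val + 1)) → ℕ)
    (hG : ∀ (t : ∀ k : Fin N, Fin (k.val + 1)) (c : Fin (K + 1)),
      G (Function.update t ⟨K, hK⟩ c) = G t) (c₀ : Fin (K + 1)) :
    (K + 1) * (∑ t : ∀ k : Fin N, Fin (k.val + 1), if t ⟨K, hK⟩ = c₀ then G t else 0)
      = ∑ t : ∀ k : Fin N, Fin (k.val + 1), G t := by
  have hfib : ∀ c : Fin (K + 1),
      (∑ t : ∀ k : Fin N, Fin (k.val + 1), if t ⟨K, hK⟩ = c then G t else 0)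
        = ∑ t : ∀ k : Fin N, Fin (k.val + 1), if t ⟨K, hK⟩ = c₀ then G t else 0 := by
    intro c
    set σ : Equiv.Perm (Fin (K + 1)) := Equiv.swap c c₀ with hσ
    set φ : (∀ k : Fin N, Fin (k.val + 1)) → (∀ k : Fin N, Fin (k.val + 1)) :=
      fun t => Function.update t ⟨K, hK⟩ (σ (t ⟨K, hK⟩)) with hφ
    have hφat : ∀ t, φ t ⟨K, hK⟩ = σ (t ⟨K, hK⟩) := fun t => Function.update_self _ _ _
    have hinv : Function.Involutive φ := by
      intro t
      funext j
      by_cases hj : j = ⟨K, hK⟩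
      · subst hj
        rw [hφ]
        simp only [Function.update_self]
        exact Equiv.swap_apply_self _ _ _
      · rw [hφ]
        simp only [Function.update_of_ne hj]
    have hbij := hinv.bijective
    have hsum := Fintype.sum_bijective φ hbij
      (fun t => if t ⟨K, hK⟩ = c then G t else 0)
      (fun t => if t ⟨K, hK⟩ = c₀ then G t else 0)
      ?_
    · exact hsum
    · intro t
      simp only []
      rw [hφat t, hG]
      congr 1
      rw [eq_iff_iff]
      constructor
      · intro h
        rw [h, hσ]
        exact Equiv.swap_apply_left c c₀
      · intro h
        apply σ.injective
        rw [h, hσ]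
        exact (Equiv.swap_apply_left c c₀).symm
  have htot : (∑ t : ∀ k : Fin N, Fin (k.val + 1), G t)
      = ∑ c : Fin (K + 1), ∑ t : ∀ k : Fin N, Fin (k.val + 1),
          if t ⟨K, hK⟩ = c then G t else 0 := by
    rw [Finset.sum_comm]
    apply Finset.sum_congr rfl
    intro t _
    rw [Finset.sum_ite_eq]
    simp
  rw [htot, Finset.sum_congr rfl (fun c _ => hfib c), Finset.sum_const, Finset.card_univ,
    Fintype.card_fin, smul_eq_mul]

end Fiber


section Rec

variable {N : ℕ}

lemma Hc_rec {K : ℕ} (hK : K < N) (v : Fin N) :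
    (K + 1) * Hc N (K + 1) v
      = (K + 1) * (∑ t : ∀ k : Fin N, Fin (k.val + 1),
            if v = ⟨K, hK⟩ ∨ v = emb ⟨K, hK⟩ (t ⟨K, hK⟩) then 1 else 0)
        + ∑ c : Fin (K + 1), Hc N K (Equiv.swap ⟨K, hK⟩ (emb ⟨K, hK⟩ c) v) := by
  have hsplit : Hc N (K + 1) v
      = (∑ t : ∀ k : Fin N, Fin (k.val + 1),
          (act t K (Equiv.swap ⟨K, hK⟩ (emb ⟨K, hK⟩ (t ⟨K, hK⟩)) v)).card)
        + ∑ t : ∀ k : Fin N, Fin (k.val + 1),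
            if v = ⟨K, hK⟩ ∨ v = emb ⟨K, hK⟩ (t ⟨K, hK⟩) then 1 else 0 := by
    unfold Hc
    rw [← Finset.sum_add_distrib]
    exact Finset.sum_congr rfl (fun t _ => card_act_succ hK t v)
  have hB : (∑ t : ∀ k : Fin N, Fin (k.val + 1),
        (act t K (Equiv.swap ⟨K, hK⟩ (emb ⟨K, hK⟩ (t ⟨K, hK⟩)) v)).card)
      = ∑ c : Fin (K + 1), ∑ t : ∀ k : Fin N, Fin (k.val + 1),
          if t ⟨K, hK⟩ = c then (act t K (Equiv.swap ⟨K, hK⟩ (emb ⟨K, hK⟩ c) v)).card else 0 := by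
    rw [Finset.sum_comm]
    apply Finset.sum_congr rfl
    intro t _
    rw [Finset.sum_ite_eq]
    simp
  have hfib : ∀ c : Fin (K + 1),
      (K + 1) * (∑ t : ∀ k : Fin N, Fin (k.val + 1),
          if t ⟨K, hK⟩ = c then (act t K (Equiv.swap ⟨K, hK⟩ (emb ⟨K, hK⟩ c) v)).card else 0)
        = Hc N K (Equiv.swap ⟨K, hK⟩ (emb ⟨K, hK⟩ c) v) := by
    intro c
    exact fiber_sum hK _ (fun t c' => by rw [act_update hK]) c
  have hBmul : (K + 1) * (∑ t : ∀ k : Fin N, Fin (k.val + 1),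
        (act t K (Equiv.swap ⟨K, hK⟩ (emb ⟨K, hK⟩ (t ⟨K, hK⟩)) v)).card)
      = ∑ c : Fin (K + 1), Hc N K (Equiv.swap ⟨K, hK⟩ (emb ⟨K, hK⟩ c) v) := by
    rw [hB, Finset.mul_sum]
    exact Finset.sum_congr rfl (fun c _ => hfib c)
  rw [hsplit, Nat.mul_add, hBmul, Nat.add_comm]

lemma Hc_bound : ∀ K : ℕ, K ≤ N → ∀ v : Fin N, v.val < K →
    K * Hc N K v ≤ (K + 2 * v.val) * N.factorial := by
  intro K
  induction K with
  | zero => intro _ v hv; omega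
  | succ K ih =>
    intro hKN v hv
    have hK : K < N := hKN
    have ihK : K ≤ N := Nat.le_of_succ_le hKN
    by_cases hvK : v.val = K
    · -- v is the top index
      have hveq : v = ⟨K, hK⟩ := Fin.ext hvK
      have hAtop : (∑ t : ∀ k : Fin N, Fin (k.val + 1),
          if v = ⟨K, hK⟩ ∨ v = emb ⟨K, hK⟩ (t ⟨K, hK⟩) then 1 else 0)
            = N.factorial := by
        rw [Finset.sum_congr rfl (fun t _ => if_pos (Or.inl hveq)), Finset.sum_const,
          Finset.card_univ, card_T, smul_eq_mul, Nat.mul_one]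
      have hswap : ∀ c : Fin (K + 1),
          Equiv.swap ⟨K, hK⟩ (emb ⟨K, hK⟩ c) v = emb ⟨K, hK⟩ c := by
        intro c
        rw [hveq]
        exact Equiv.swap_apply_left _ _
      have hS2 : (∑ c : Fin (K + 1), Hc N K (Equiv.swap ⟨K, hK⟩ (emb ⟨K, hK⟩ c) v))
          ≤ 2 * K * N.factorial := by
        rcases Nat.eq_zero_or_pos K with hK0 | hKpos
        · subst hK0
          have hz : ∀ c : Fin 1, Hc N 0 (Equiv.swap ⟨0, hK⟩ (emb ⟨0, hK⟩ c) v) = 0 :=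
            fun c => Hc_out (Nat.zero_le _)
          rw [Finset.sum_congr rfl (fun c _ => hz c)]
          simp
        · have hterm : ∀ c : Fin (K + 1),
              K * Hc N K (Equiv.swap ⟨K, hK⟩ (emb ⟨K, hK⟩ c) v)
                ≤ if c.val < K then (K + 2 * c.val) * N.factorial else 0 := by
            intro c
            rw [hswap c]
            by_cases hc : c.val < K
            · rw [if_pos hc]
              exact ih ihK (emb ⟨K, hK⟩ c) hc
            · rw [if_neg hc]
              have hcv : K ≤ (emb ⟨K, hK⟩ c).val := by
                have hre : (emb ⟨K, hK⟩ c).val = c.val := rfl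
                rw [hre]
                exact Nat.le_of_not_lt hc
              rw [Hc_out hcv, Nat.mul_zero]
          have hmul : K * (∑ c : Fin (K + 1), Hc N K (Equiv.swap ⟨K, hK⟩ (emb ⟨K, hK⟩ c) v))
              ≤ K * (2 * K * N.factorial) := by
            calc K * ∑ c : Fin (K + 1), Hc N K (Equiv.swap ⟨K, hK⟩ (emb ⟨K, hK⟩ c) v)
                = ∑ c : Fin (K + 1), K * Hc N K (Equiv.swap ⟨K, hK⟩ (emb ⟨K, hK⟩ c) v) := by
                  rw [Finset.mul_sum]
              _ ≤ ∑ c : Fin (K + 1), if c.val < K then (K + 2 * c.val) * N.factorial else 0 :=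
                  Finset.sum_le_sum (fun c _ => hterm c)
              _ = ∑ i ∈ Finset.range (K + 1),
                    if i < K then (K + 2 * i) * N.factorial else 0 := by
                  rw [Fin.sum_univ_eq_sum_range
                    (fun i => if i < K then (K + 2 * i) * N.factorial else 0) (K + 1)]
              _ = ∑ i ∈ Finset.range K, (K + 2 * i) * N.factorial := by
                  rw [Finset.sum_range_succ, if_neg (lt_irrefl K), Nat.add_zero]
                  exact Finset.sum_congr rfl (fun i hi => if_pos (Finset.mem_range.mp hi))
              _ = (∑ i ∈ Finset.range K, (K + 2 * i)) * N.factorial := by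
                  rw [Finset.sum_mul]
              _ ≤ K * (2 * K * N.factorial) := by
                  have h1 : (∑ i ∈ Finset.range K, (K + 2 * i))
                      = K * K + (∑ i ∈ Finset.range K, i) * 2 := by
                    rw [Finset.sum_add_distrib, Finset.sum_const, Finset.card_range,
                      smul_eq_mul, Finset.sum_mul]
                    congr 1
                    exact Finset.sum_congr rfl (fun i _ => Nat.mul_comm 2 i)
                  rw [h1, Finset.sum_range_id_mul_two]
                  have h3 : K * (K - 1) ≤ K * K := Nat.mul_le_mul_left K (Nat.sub_le K 1)
                  have h4 : K * (2 * K) = K * K + K * K := by ring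
                  have h2 : K * K + K * (K - 1) ≤ K * (2 * K) := by
                    rw [h4]
                    exact Nat.add_le_add_left h3 _
                  calc (K * K + K * (K - 1)) * N.factorial
                      ≤ (K * (2 * K)) * N.factorial := Nat.mul_le_mul_right _ h2
                    _ = K * (2 * K * N.factorial) := by ring
          exact Nat.le_of_mul_le_mul_left hmul hKpos
      have hrec := Hc_rec hK v
      calc (K + 1) * Hc N (K + 1) v
          = (K + 1) * N.factorial
            + ∑ c : Fin (K + 1), Hc N K (Equiv.swap ⟨K, hK⟩ (emb ⟨K, hK⟩ c) v) := by
            rw [hrec, hAtop]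
        _ ≤ (K + 1) * N.factorial + 2 * K * N.factorial := Nat.add_le_add_left hS2 _
        _ = (K + 1 + 2 * v.val) * N.factorial := by rw [hvK]; ring
    · -- v below the top index
      have hvlt : v.val < K := by omega
      have hvne : v ≠ ⟨K, hK⟩ := by
        intro h
        rw [Fin.ext_iff] at h
        exact hvK h
      have hvK1 : v.val < K + 1 := hv
      have hAtop : (K + 1) * (∑ t : ∀ k : Fin N, Fin (k.val + 1),
          if v = ⟨K, hK⟩ ∨ v = emb ⟨K, hK⟩ (t ⟨K, hK⟩) then 1 else 0) = N.factorial := by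
        have hconv : ∀ t : ∀ k : Fin N, Fin (k.val + 1),
            (if v = ⟨K, hK⟩ ∨ v = emb ⟨K, hK⟩ (t ⟨K, hK⟩) then 1 else 0)
              = (if t ⟨K, hK⟩ = (⟨v.val, hvK1⟩ : Fin (K + 1)) then (1:ℕ) else 0) := by
          intro t
          congr 1
          rw [eq_iff_iff]
          constructor
          · rintro (h | h)
            · exact absurd h hvne
            · apply Fin.ext
              have h2 : v.val = (t ⟨K, hK⟩).val := congrArg Fin.val h
              exact h2.symm
          · intro h
            refine Or.inr (Fin.ext ?_)
            have h2 : (t ⟨K, hK⟩).val = v.val := congrArg Fin.val h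
            exact (h2.symm : v.val = _)
        rw [Finset.sum_congr rfl (fun t _ => hconv t),
          fiber_sum hK (fun _ => 1) (fun _ _ => rfl) ⟨v.val, hvK1⟩, Finset.sum_const,
          Finset.card_univ, card_T, smul_eq_mul, Nat.mul_one]
      have hS2 : (∑ c : Fin (K + 1), Hc N K (Equiv.swap ⟨K, hK⟩ (emb ⟨K, hK⟩ c) v))
          = K * Hc N K v := by
        have hterm : ∀ c : Fin (K + 1), Hc N K (Equiv.swap ⟨K, hK⟩ (emb ⟨K, hK⟩ c) v)
            = if c = (⟨v.val, hvK1⟩ : Fin (K + 1)) then 0 else Hc N K v := by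
          intro c
          by_cases hc : c = (⟨v.val, hvK1⟩ : Fin (K + 1))
          · have hembv : emb ⟨K, hK⟩ c = v := by
              apply Fin.ext
              have h2 : c.val = v.val := congrArg Fin.val hc
              exact h2
            rw [if_pos hc, hembv, Equiv.swap_apply_right]
            exact Hc_out le_rfl
          · have hembv : emb ⟨K, hK⟩ c ≠ v := by
              intro h
              apply hc
              have h2 : (emb ⟨K, hK⟩ c).val = v.val := congrArg Fin.val h
              exact Fin.ext h2
            rw [if_neg hc, Equiv.swap_apply_of_ne_of_ne hvne hembv.symm]
        rw [Finset.sum_congr rfl (fun c _ => hterm c)]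
        rw [← Finset.add_sum_erase Finset.univ _ (Finset.mem_univ (⟨v.val, hvK1⟩ : Fin (K + 1))),
          if_pos rfl, Nat.zero_add]
        rw [Finset.sum_congr rfl
          (fun c hc => if_neg (Finset.ne_of_mem_erase hc)), Finset.sum_const,
          Finset.card_erase_of_mem (Finset.mem_univ _), Finset.card_univ, Fintype.card_fin,
          smul_eq_mul]
        simp
      have hih := ih ihK v hvlt
      have hrec := Hc_rec hK v
      calc (K + 1) * Hc N (K + 1) v
          = N.factorial + K * Hc N K v := by rw [hrec, hAtop, hS2]
        _ ≤ N.factorial + (K + 2 * v.val) * N.factorial := Nat.add_le_add_left hih _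
        _ = (K + 1 + 2 * v.val) * N.factorial := by ring

end Rec

section Final

variable {N : ℕ}

lemma invActiveSet_eq (t : ∀ k : Fin N, Fin (k.val + 1)) (y : Fin N) :
    invActiveSet (Phi t) y = act t N y := by
  ext j
  simp only [invActiveSet, act, Finset.mem_filter, Finset.mem_univ, true_and]
  have h1 : (ptail (Phi t) j)⁻¹ = Vm t (j.val + 1) N := by
    rw [ptail_inv_eq, tof_Phi]
  rw [h1, tof_Phi]
  exact ⟨fun h => ⟨j.isLt, h⟩, fun h => h.2⟩

lemma sum_card_eq (y : Fin N) :
    (∑ π : Equiv.Perm (Fin N), (invActiveSet π y).card) = Hc N N y := by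
  unfold Hc
  rw [← Fintype.sum_bijective Phi Phi_bijective
    (fun t => (invActiveSet (Phi t) y).card) (fun π => (invActiveSet π y).card) (fun t => rfl)]
  exact Finset.sum_congr rfl (fun t _ => by rw [invActiveSet_eq t y])

end Final

/-- For every `y ∈ [N]`, the expected number of inverse-active locations
for a uniformly random permutation satisfies
`(1/N!) ∑_π |A^inv(π,y)| ≤ 1 + (2y − 2)/N < 3`. -/
theorem stmt8 {N : ℕ} (hN : 1 ≤ N) (y : Fin N) :
    (∑ π : Equiv.Perm (Fin N), ((invActiveSet π y).card : ℝ)) / (N.factorial : ℝ)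
        ≤ 1 + (2 * ((y.val : ℝ) + 1) - 2) / (N : ℝ)
    ∧ (∑ π : Equiv.Perm (Fin N), ((invActiveSet π y).card : ℝ)) / (N.factorial : ℝ) < 3 := by
  have hnat : N * (∑ π : Equiv.Perm (Fin N), (invActiveSet π y).card)
      ≤ (N + 2 * y.val) * N.factorial := by
    rw [sum_card_eq y]
    exact Hc_bound N le_rfl y y.isLt
  have hfac : (0 : ℝ) < (N.factorial : ℝ) := by
    exact_mod_cast N.factorial_pos
  have hNpos : (0 : ℝ) < (N : ℝ) := by
    exact_mod_cast hN
  have hSr : (∑ π : Equiv.Perm (Fin N), ((invActiveSet π y).card : ℝ))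
      = ((∑ π : Equiv.Perm (Fin N), (invActiveSet π y).card : ℕ) : ℝ) := by
    rw [Nat.cast_sum]
  have hcast : (N : ℝ) * ((∑ π : Equiv.Perm (Fin N), (invActiveSet π y).card : ℕ) : ℝ)
      ≤ ((N : ℝ) + 2 * (y.val : ℝ)) * (N.factorial : ℝ) := by
    exact_mod_cast hnat
  have heq : 1 + (2 * ((y.val : ℝ) + 1) - 2) / (N : ℝ)
      = ((N : ℝ) + 2 * (y.val : ℝ)) / (N : ℝ) := by
    field_simp
    ring
  have part1 : (∑ π : Equiv.Perm (Fin N), ((invActiveSet π y).card : ℝ)) / (N.factorial : ℝ)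
      ≤ 1 + (2 * ((y.val : ℝ) + 1) - 2) / (N : ℝ) := by
    rw [hSr, heq, div_le_div_iff₀ hfac hNpos]
    nlinarith [hcast]
  refine ⟨part1, lt_of_le_of_lt part1 ?_⟩
  have hyN : ((y.val : ℝ)) < (N : ℝ) := by exact_mod_cast y.isLt
  have h6 : (2 * ((y.val : ℝ) + 1) - 2) / (N : ℝ) < 2 := by
    rw [div_lt_iff₀ hNpos]
    nlinarith
  linarith
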